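/- Let H₁ be the three-dimensional simply connected Heisenberg group with Lie algebra spanned by orthonormal vectors X, Y, Z and bracket [X,Y] = Z, with the associated left-invariant metric. Let γ = exp(cZ) be a central element with c > 0. Then the set of lengths of closed geodesics in the free homotopy class determined by γ in any quotient containing γ is {c} ∪ {√(4πk(c − πk)) : k ∈ ℤ, 1 ≤ k < c/(2π)}; in particular, if c ≤ 2π the only period is c, and nonintegral-type lengths √(4πk(c−πk)) occur only when c > 2π. -/

import Mathlib

namespace Stmt14

/-- The simply connected 3-dimensional Heisenberg group in exponential
coordinates `(x, y, z) = exp(xX + yY + zZ)`, with `[X,Y] = Z`: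
Campbell–Baker–Hausdorff multiplication. -/
noncomputable def hmul (g h : ℝ × ℝ × ℝ) : ℝ × ℝ × ℝ :=
  (g.1 + h.1, g.2.1 + h.2.1, g.2.2 + h.2.2 + (g.1 * h.2.1 - g.2.1 * h.1) / 2)

/-- A unit-speed geodesic of the left-invariant metric making `{X, Y, Z}`
orthonormal: the left-trivialized velocity `(a, b, c)` has unit norm and
satisfies the Euler–Arnold geodesic equations `a' = -cb`, `b' = ca`, `c' = 0`. -/
def IsUnitSpeedGeodesic (σ : ℝ → ℝ × ℝ × ℝ) : Prop :=
  ∃ a b c : ℝ → ℝ,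
    Differentiable ℝ (fun s => (σ s).1) ∧
    Differentiable ℝ (fun s => (σ s).2.1) ∧
    Differentiable ℝ (fun s => (σ s).2.2) ∧
    (∀ s, a s = deriv (fun t => (σ t).1) s) ∧
    (∀ s, b s = deriv (fun t => (σ t).2.1) s) ∧
    (∀ s, c s = deriv (fun t => (σ t).2.2) s
      - ((σ s).1 * b s - (σ s).2.1 * a s) / 2) ∧
    Differentiable ℝ a ∧ Differentiable ℝ b ∧ Differentiable ℝ c ∧
    (∀ s, a s ^ 2 + b s ^ 2 + c s ^ 2 = 1) ∧
    (∀ s, deriv a s = -(c s) * b s) ∧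
    (∀ s, deriv b s = c s * a s) ∧
    (∀ s, deriv c s = 0)

/-- `lam` is a period of `γ`: some unit-speed geodesic is translated by `γ`
with period `lam`. -/
def IsPeriod (γ : ℝ × ℝ × ℝ) (lam : ℝ) : Prop :=
  0 < lam ∧ ∃ σ : ℝ → ℝ × ℝ × ℝ,
    IsUnitSpeedGeodesic σ ∧ ∀ s : ℝ, hmul γ (σ s) = σ (s + lam)

open Real

private lemma const_of_hasDerivAt_zero {f : ℝ → ℝ} (h : ∀ s, HasDerivAt f 0 s) (s : ℝ) :
    f s = f 0 :=
  is_const_of_deriv_eq_zero (fun x => (h x).differentiableAt) (fun x => (h x).deriv) s 0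

private lemma vertical (c : ℝ) (hc : 0 < c) : IsPeriod (0, 0, c) c := by
  refine ⟨hc, fun s => ((0:ℝ), (0:ℝ), s), ⟨fun _ => 0, fun _ => 0, fun _ => 1,
    ?_, ?_, ?_, ?_, ?_, ?_, ?_, ?_, ?_, ?_, ?_, ?_, ?_⟩, ?_⟩
  · exact differentiable_const 0
  · exact differentiable_const 0
  · exact differentiable_id
  · intro s; simp
  · intro s; simp
  · intro s; simp
  · exact differentiable_const 0
  · exact differentiable_const 0
  · exact differentiable_const 1
  · intro s; norm_num
  · intro s; simp
  · intro s; simp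
  · intro s; simp
  · intro s; simp [hmul]; ring


private lemma hm (ω : ℝ) : ∀ s : ℝ, HasDerivAt (fun t => ω * t) ω s := by
  intro s; simpa using (hasDerivAt_id s).const_mul ω

private lemma spiral_period (c ω lam : ℝ) (k : ℤ) (hω : 0 < ω) (hω1 : ω ^ 2 < 1)
    (hlam : 0 < lam) (hθ : ω * lam = (k : ℝ) * (2 * π))
    (hzc : (ω + (1 - ω ^ 2) / (2 * ω)) * lam = c) :
    IsPeriod (0, 0, c) lam := by
  have hωne : ω ≠ 0 := hω.ne'
  set r : ℝ := Real.sqrt (1 - ω ^ 2) with hrdef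
  have hr2 : r ^ 2 = 1 - ω ^ 2 := Real.sq_sqrt (by nlinarith)
  have hX : ∀ s : ℝ, HasDerivAt (fun t => r / ω * Real.sin (ω * t)) (r * Real.cos (ω * s)) s := by
    intro s
    have h := ((hm ω s).sin).const_mul (r / ω)
    refine h.congr_deriv ?_
    field_simp
  have hY : ∀ s : ℝ, HasDerivAt (fun t => -(r / ω * Real.cos (ω * t))) (r * Real.sin (ω * s)) s := by
    intro s
    have h := (((hm ω s).cos).const_mul (r / ω)).neg
    refine h.congr_deriv ?_
    field_simp
  have hZ : ∀ s : ℝ, HasDerivAt (fun t => (ω + r ^ 2 / (2 * ω)) * t) (ω + r ^ 2 / (2 * ω)) s :=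
    hm _
  have hA : ∀ s : ℝ, HasDerivAt (fun t => r * Real.cos (ω * t)) (-ω * (r * Real.sin (ω * s))) s := by
    intro s
    have h := ((hm ω s).cos).const_mul r
    refine h.congr_deriv ?_
    ring
  have hB : ∀ s : ℝ, HasDerivAt (fun t => r * Real.sin (ω * t)) (ω * (r * Real.cos (ω * s))) s := by
    intro s
    have h := ((hm ω s).sin).const_mul r
    refine h.congr_deriv ?_
    ring
  refine ⟨hlam, fun s => (r / ω * Real.sin (ω * s), -(r / ω * Real.cos (ω * s)),
      (ω + r ^ 2 / (2 * ω)) * s),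
    ⟨fun s => r * Real.cos (ω * s), fun s => r * Real.sin (ω * s), fun _ => ω,
      ?_, ?_, ?_, ?_, ?_, ?_, ?_, ?_, ?_, ?_, ?_, ?_, ?_⟩, ?_⟩
  · exact fun s => (hX s).differentiableAt
  · exact fun s => (hY s).differentiableAt
  · exact fun s => (hZ s).differentiableAt
  · intro s; exact ((hX s).deriv).symm
  · intro s; exact ((hY s).deriv).symm
  · intro s
    rw [(hZ s).deriv]
    dsimp only
    linear_combination (r ^ 2 / (2 * ω)) * (Real.sin_sq_add_cos_sq (ω * s))
  · exact fun s => (hA s).differentiableAt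
  · exact fun s => (hB s).differentiableAt
  · exact differentiable_const ω
  · intro s
    dsimp only
    linear_combination r ^ 2 * (Real.sin_sq_add_cos_sq (ω * s)) + hr2
  · intro s; rw [(hA s).deriv]
  · intro s; rw [(hB s).deriv]
  · intro s; simp
  · intro s
    have harg : ω * (s + lam) = ω * s + (k : ℝ) * (2 * π) := by rw [mul_add, hθ]
    simp only [hmul, Prod.mk.injEq, harg, Real.sin_add_int_mul_two_pi,
      Real.cos_add_int_mul_two_pi]
    refine ⟨by ring, by ring, ?_⟩
    linear_combination (-1) * hzc - (lam / (2 * ω)) * hr2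


private lemma spiral_mem (c : ℝ) (hc : 0 < c) (k : ℤ) (hk1 : 1 ≤ k) (hk2 : (k : ℝ) < c / (2 * π)) :
    IsPeriod (0, 0, c) (Real.sqrt (4 * π * k * (c - π * k))) := by
  have hπ := Real.pi_pos
  have hk1' : (1 : ℝ) ≤ (k : ℝ) := by exact_mod_cast hk1
  have h2πk : 2 * π * (k : ℝ) < c := by
    rw [lt_div_iff₀ (by positivity)] at hk2; nlinarith
  have hd : 0 < c - π * k := by nlinarith
  have hπk : 0 < π * (k : ℝ) := by nlinarith
  set ω := Real.sqrt (π * k / (c - π * k)) with hωdef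
  have hω2 : ω ^ 2 = π * k / (c - π * k) := Real.sq_sqrt (by positivity)
  have hωpos : 0 < ω := Real.sqrt_pos.mpr (by positivity)
  have hω2lt : ω ^ 2 < 1 := by rw [hω2, div_lt_one hd]; nlinarith
  set lam := Real.sqrt (4 * π * k * (c - π * k)) with hlamdef
  have hlam2 : lam ^ 2 = 4 * π * k * (c - π * k) := Real.sq_sqrt (by positivity)
  have hlampos : 0 < lam := Real.sqrt_pos.mpr (by positivity)
  have hθ : ω * lam = (k : ℝ) * (2 * π) := by
    have h1 : (ω * lam) ^ 2 = ((k : ℝ) * (2 * π)) ^ 2 := by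
      rw [mul_pow, hω2, hlam2]; field_simp; ring
    have h2 : 0 < ω * lam := mul_pos hωpos hlampos
    have h3 : (0 : ℝ) ≤ (k : ℝ) * (2 * π) := by positivity
    rw [show ω * lam = Real.sqrt ((ω * lam) ^ 2) from (Real.sqrt_sq h2.le).symm, h1,
      Real.sqrt_sq h3]
  have e1 : ω ^ 2 * (c - π * k) = π * k := by rw [hω2]; field_simp
  have haux : ω * ((1 + ω ^ 2) * lam) = ω * (2 * ω * c) := by
    linear_combination (1 + ω ^ 2) * hθ - 2 * e1
  have h4 : (1 + ω ^ 2) * lam = 2 * ω * c := mul_left_cancel₀ hωpos.ne' haux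
  have hzc : (ω + (1 - ω ^ 2) / (2 * ω)) * lam = c := by
    have hne : ω ≠ 0 := hωpos.ne'
    field_simp
    linear_combination h4
  exact spiral_period c ω lam k hωpos hω2lt hlampos hθ hzc

set_option maxHeartbeats 1000000 in
private lemma forward (c lam : ℝ) (hc : 0 < c) (h : IsPeriod (0, 0, c) lam) :
    lam = c ∨ ∃ k : ℤ, 1 ≤ k ∧ (k : ℝ) < c / (2 * π) ∧
      lam = Real.sqrt (4 * π * k * (c - π * k)) := by
  obtain ⟨hlam, σ, ⟨a, b, cc, hdx, hdy, hdz, hax, hby, hcz, hda, hdb, hdcc,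
    hnorm, hA', hB', hC'⟩, hper⟩ := h
  have hπ := Real.pi_pos
  -- periodicity of the components
  have hperx : ∀ s, (σ (s + lam)).1 = (σ s).1 := by
    intro s; rw [← hper s]; simp [hmul]
  have hpery : ∀ s, (σ (s + lam)).2.1 = (σ s).2.1 := by
    intro s; rw [← hper s]; simp [hmul]
  have hperz : ∀ s, (σ (s + lam)).2.2 = (σ s).2.2 + c := by
    intro s; rw [← hper s]; simp [hmul]; ring
  -- cc is constant
  set ω := cc 0 with hωdef
  have hccc : ∀ s, cc s = ω := fun s => is_const_of_deriv_eq_zero hdcc hC' s 0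
  -- derivative facts
  have haD : ∀ s, HasDerivAt a (-ω * b s) s := by
    intro s; have h1 := (hda s).hasDerivAt; rwa [hA' s, hccc s] at h1
  have hbD : ∀ s, HasDerivAt b (ω * a s) s := by
    intro s; have h1 := (hdb s).hasDerivAt; rwa [hB' s, hccc s] at h1
  have hxD : ∀ s, HasDerivAt (fun t => (σ t).1) (a s) s := by
    intro s; have h1 := (hdx s).hasDerivAt; rwa [← hax s] at h1
  have hyD : ∀ s, HasDerivAt (fun t => (σ t).2.1) (b s) s := by
    intro s; have h1 := (hdy s).hasDerivAt; rwa [← hby s] at h1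
  have hzD : ∀ s, HasDerivAt (fun t => (σ t).2.2)
      (ω + ((σ s).1 * b s - (σ s).2.1 * a s) / 2) s := by
    intro s
    have h1 := (hdz s).hasDerivAt
    have e : deriv (fun t => (σ t).2.2) s = ω + ((σ s).1 * b s - (σ s).2.1 * a s) / 2 := by
      have h2 := hcz s; rw [hccc s] at h2; linarith
    rwa [e] at h1
  -- explicit solution for a, b
  have hu : ∀ s, a s * Real.cos (ω * s) + b s * Real.sin (ω * s) = a 0 := by
    intro s
    have hf : ∀ t, HasDerivAt (fun t => a t * Real.cos (ω * t) + b t * Real.sin (ω * t)) 0 t := by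
      intro t
      have h1 := ((haD t).mul ((hm ω t).cos)).add ((hbD t).mul ((hm ω t).sin))
      refine h1.congr_deriv ?_; ring
    have := const_of_hasDerivAt_zero hf s
    simpa using this
  have hv : ∀ s, b s * Real.cos (ω * s) - a s * Real.sin (ω * s) = b 0 := by
    intro s
    have hf : ∀ t, HasDerivAt (fun t => b t * Real.cos (ω * t) - a t * Real.sin (ω * t)) 0 t := by
      intro t
      have h1 := ((hbD t).mul ((hm ω t).cos)).sub ((haD t).mul ((hm ω t).sin))
      refine h1.congr_deriv ?_; ring
    have := const_of_hasDerivAt_zero hf s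
    simpa using this
  have haf : ∀ s, a s = a 0 * Real.cos (ω * s) - b 0 * Real.sin (ω * s) := by
    intro s
    have h1 := hu s; have h2 := hv s; have h3 := Real.sin_sq_add_cos_sq (ω * s)
    linear_combination Real.cos (ω * s) * h1 - Real.sin (ω * s) * h2 - a s * h3
  have hbf : ∀ s, b s = a 0 * Real.sin (ω * s) + b 0 * Real.cos (ω * s) := by
    intro s
    have h1 := hu s; have h2 := hv s; have h3 := Real.sin_sq_add_cos_sq (ω * s)
    linear_combination Real.sin (ω * s) * h1 + Real.cos (ω * s) * h2 - b s * h3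
  have hr : ∀ s, a s ^ 2 + b s ^ 2 = 1 - ω ^ 2 := by
    intro s; have h1 := hnorm s; rw [hccc s] at h1; linarith
  have hAB : a 0 ^ 2 + b 0 ^ 2 = 1 - ω ^ 2 := hr 0
  -- periodicity of a and b
  have hpera : ∀ s, a (s + lam) = a s := by
    intro s
    have hfun : (fun t => (σ (t + lam)).1) = (fun t => (σ t).1) := funext hperx
    have h1 : deriv (fun t => (σ (t + lam)).1) s = deriv (fun t => (σ t).1) (s + lam) := by
      have := deriv_comp_add_const (fun t => (σ t).1) lam s; simpa using this
    have h2 : deriv (fun t => (σ (t + lam)).1) s = deriv (fun t => (σ t).1) s := by rw [hfun]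
    rw [hax (s + lam), hax s, ← h1, h2]
  have hperb : ∀ s, b (s + lam) = b s := by
    intro s
    have hfun : (fun t => (σ (t + lam)).2.1) = (fun t => (σ t).2.1) := funext hpery
    have h1 : deriv (fun t => (σ (t + lam)).2.1) s = deriv (fun t => (σ t).2.1) (s + lam) := by
      have := deriv_comp_add_const (fun t => (σ t).2.1) lam s; simpa using this
    have h2 : deriv (fun t => (σ (t + lam)).2.1) s = deriv (fun t => (σ t).2.1) s := by rw [hfun]
    rw [hby (s + lam), hby s, ← h1, h2]
  have eqa : a lam = a 0 := by simpa using hpera 0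
  have eqb : b lam = b 0 := by simpa using hperb 0
  have hzl : (σ lam).2.2 = (σ 0).2.2 + c := by simpa using hperz 0
  by_cases hab0 : a 0 = 0 ∧ b 0 = 0
  · -- vertical case
    obtain ⟨ha0, hb0⟩ := hab0
    have haz : ∀ s, a s = 0 := by intro s; rw [haf s, ha0, hb0]; ring
    have hbz : ∀ s, b s = 0 := by intro s; rw [hbf s, ha0, hb0]; ring
    have hω2 : ω ^ 2 = 1 := by rw [ha0, hb0] at hAB; nlinarith
    have hz1 : ∀ s, HasDerivAt (fun t => (σ t).2.2) ω s := by
      intro s; have h1 := hzD s; rw [haz s, hbz s] at h1; simpa using h1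
    have hf : ∀ s, HasDerivAt (fun t => (σ t).2.2 - ω * t) 0 s := by
      intro s; have := (hz1 s).sub (hm ω s); exact this.congr_deriv (sub_self _)
    have h1 := const_of_hasDerivAt_zero hf lam
    have hωlam : ω * lam = c := by rw [hzl] at h1; linarith
    have hωpos : 0 < ω := by nlinarith
    have h9 : (ω - 1) * (ω + 1) = 0 := by linear_combination hω2
    rcases mul_eq_zero.mp h9 with h9 | h9
    · left; have : ω = 1 := by linarith
      rw [this] at hωlam; linarith
    · exfalso; linarith
  · -- spiral case
    have h1 : a 0 ^ 2 + b 0 ^ 2 ≠ 0 := by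
      intro hzero
      apply hab0
      constructor
      · have h2 : a 0 ^ 2 = 0 := le_antisymm (by nlinarith [sq_nonneg (b 0)]) (sq_nonneg _)
        exact pow_eq_zero_iff two_ne_zero |>.mp h2
      · have h2 : b 0 ^ 2 = 0 := le_antisymm (by nlinarith [sq_nonneg (a 0)]) (sq_nonneg _)
        exact pow_eq_zero_iff two_ne_zero |>.mp h2
    have hABpos : 0 < a 0 ^ 2 + b 0 ^ 2 := lt_of_le_of_ne (by positivity) (Ne.symm h1)
    by_cases hω0 : ω = 0
    · -- impossible: straight line can't be periodic
      exfalso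
      have haconst : ∀ s, a s = a 0 := by
        intro s; rw [haf s, hω0]; simp
      have hbconst : ∀ s, b s = b 0 := by
        intro s; rw [hbf s, hω0]; simp
      have hfx : ∀ s, HasDerivAt (fun t => (σ t).1 - a 0 * t) 0 s := by
        intro s
        have h2 := (hxD s).sub (hm (a 0) s)
        rw [haconst s] at h2; exact h2.congr_deriv (sub_self _)
      have hfy : ∀ s, HasDerivAt (fun t => (σ t).2.1 - b 0 * t) 0 s := by
        intro s
        have h2 := (hyD s).sub (hm (b 0) s)
        rw [hbconst s] at h2; exact h2.congr_deriv (sub_self _)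
      have h2 := const_of_hasDerivAt_zero hfx lam
      have h3 := const_of_hasDerivAt_zero hfy lam
      have hx0 : (σ lam).1 = (σ 0).1 := by simpa using hperx 0
      have hy0 : (σ lam).2.1 = (σ 0).2.1 := by simpa using hpery 0
      rw [hx0] at h2; rw [hy0] at h3
      have ha0 : a 0 = 0 := by
        have : a 0 * lam = 0 := by linarith
        rcases mul_eq_zero.mp this with h | h
        · exact h
        · exact absurd h hlam.ne'
      have hb0 : b 0 = 0 := by
        have : b 0 * lam = 0 := by linarith
        rcases mul_eq_zero.mp this with h | h
        · exact h
        · exact absurd h hlam.ne'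
      rw [ha0, hb0] at hABpos; norm_num at hABpos
    · -- main spiral case
      right
      have hω2lt : ω ^ 2 < 1 := by nlinarith
      have hω2pos : 0 < ω ^ 2 := lt_of_le_of_ne (sq_nonneg ω) (Ne.symm (pow_ne_zero 2 hω0))
      -- x and y in terms of a and b
      have hxf : ∀ s, (σ s).1 = (σ 0).1 + (b s - b 0) / ω := by
        intro s
        have hf : ∀ t, HasDerivAt (fun t => (σ t).1 - b t / ω) 0 t := by
          intro t
          have h2 := (hxD t).sub ((hbD t).div_const ω)
          refine h2.congr_deriv ?_
          field_simp
          ring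
        have h2 := const_of_hasDerivAt_zero hf s
        linear_combination h2
      have hyf : ∀ s, (σ s).2.1 = (σ 0).2.1 + (a 0 - a s) / ω := by
        intro s
        have hf : ∀ t, HasDerivAt (fun t => (σ t).2.1 + a t / ω) 0 t := by
          intro t
          have h2 := (hyD t).add ((haD t).div_const ω)
          refine h2.congr_deriv ?_
          field_simp
          ring
        have h2 := const_of_hasDerivAt_zero hf s
        linear_combination h2
      -- rotation angle is a multiple of 2π
      have eθ1 : a 0 * Real.cos (ω * lam) - b 0 * Real.sin (ω * lam) = a 0 := by
        rw [← haf lam]; exact eqa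
      have eθ2 : a 0 * Real.sin (ω * lam) + b 0 * Real.cos (ω * lam) = b 0 := by
        rw [← hbf lam]; exact eqb
      have h5 : (a 0 ^ 2 + b 0 ^ 2) * (Real.cos (ω * lam) - 1) = 0 := by
        linear_combination a 0 * eθ1 + b 0 * eθ2
      have hcosθ : Real.cos (ω * lam) = 1 := by
        rcases mul_eq_zero.mp h5 with h | h
        · exact absurd h h1
        · linarith
      obtain ⟨k, hk⟩ := (Real.cos_eq_one_iff (ω * lam)).mp hcosθ
      -- the z equation
      have hVD : ∀ s, HasDerivAt (fun t => 2 * ω ^ 2 * (σ t).2.2)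
          (2 * ω ^ 3 + ω ^ 2 * ((σ 0).1 * b s - (σ 0).2.1 * a s)
            + ω * (a s ^ 2 + b s ^ 2 - b 0 * b s - a 0 * a s)) s := by
        intro s
        have h2 := (hzD s).const_mul (2 * ω ^ 2)
        refine h2.congr_deriv ?_
        rw [hxf s, hyf s]
        field_simp
        ring
      have hGD : ∀ s, HasDerivAt (fun t => 2 * ω ^ 2 * (σ t).2.2 -
          ((2 * ω ^ 3 + ω * (1 - ω ^ 2)) * t - ω * (σ 0).1 * a t - ω * (σ 0).2.1 * b t
            + (b 0 * a t - a 0 * b t))) 0 s := by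
        intro s
        have hlin : HasDerivAt (fun t => (2 * ω ^ 3 + ω * (1 - ω ^ 2)) * t)
            (2 * ω ^ 3 + ω * (1 - ω ^ 2)) s := hm _ s
        have h2 := (hVD s).sub ((((hlin.sub ((haD s).const_mul (ω * (σ 0).1))).sub
          ((hbD s).const_mul (ω * (σ 0).2.1))).add
          (((haD s).const_mul (b 0)).sub ((hbD s).const_mul (a 0)))))
        refine h2.congr_deriv ?_
        linear_combination ω * hr s
      have hG := const_of_hasDerivAt_zero hGD lam
      rw [hzl, eqa, eqb] at hG
      have hceq : 2 * ω ^ 2 * c = (2 * ω ^ 3 + ω * (1 - ω ^ 2)) * lam := by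
        linear_combination hG
      have hkey : ω ^ 2 * c = π * k * (1 + ω ^ 2) := by
        linear_combination hceq / 2 - (1 + ω ^ 2) / 2 * hk
      have hkpos : 0 < (k : ℝ) := by
        nlinarith [mul_pos hπ (show (0:ℝ) < 1 + ω ^ 2 by positivity), mul_pos hω2pos hc]
      have hk1 : 1 ≤ k := by
        have : 0 < k := by exact_mod_cast hkpos
        omega
      have hπk : 0 < π * (k : ℝ) := mul_pos hπ hkpos
      have hcπk : ω ^ 2 * (c - π * k) = π * k := by linear_combination hkey
      have hdpos : 0 < c - π * k := by nlinarith
      have hklt : (k : ℝ) < c / (2 * π) := by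
        rw [lt_div_iff₀ (by positivity)]
        nlinarith [mul_pos (sub_pos.mpr hω2lt) hdpos, hcπk]
      have hθ2 : ω ^ 2 * lam ^ 2 = 4 * π ^ 2 * k ^ 2 := by
        linear_combination (-(ω * lam + 2 * π * k)) * hk
      have h7 : (π * (k : ℝ)) * lam ^ 2 = (π * (k : ℝ)) * (4 * π * k * (c - π * k)) := by
        linear_combination (c - π * k) * hθ2 - lam ^ 2 * hcπk
      have hlam2 : lam ^ 2 = 4 * π * k * (c - π * k) := mul_left_cancel₀ hπk.ne' h7
      refine ⟨k, hk1, hklt, ?_⟩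
      rw [← hlam2, Real.sqrt_sq hlam.le]

open Real in
/-- for the central element `γ = exp(cZ)`, `c > 0`, the set of
periods is `{c} ∪ {√(4πk(c − πk)) : k ∈ ℤ, 1 ≤ k < c/(2π)}`; in particular for
`c ≤ 2π` the only period is `c`. -/
theorem stmt14 (c : ℝ) (hc : 0 < c) :
    ({lam | IsPeriod (0, 0, c) lam} =
      {c} ∪ {l | ∃ k : ℤ, 1 ≤ k ∧ (k : ℝ) < c / (2 * π) ∧
        l = Real.sqrt (4 * π * k * (c - π * k))}) ∧
    (c ≤ 2 * π → {lam | IsPeriod (0, 0, c) lam} = {c}) := by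
  have hπ := Real.pi_pos
  have hmain : {lam | IsPeriod (0, 0, c) lam} =
      {c} ∪ {l | ∃ k : ℤ, 1 ≤ k ∧ (k : ℝ) < c / (2 * π) ∧
        l = Real.sqrt (4 * π * k * (c - π * k))} := by
    ext lam
    simp only [Set.mem_setOf_eq, Set.mem_union, Set.mem_singleton_iff]
    constructor
    · intro h
      exact forward c lam hc h
    · rintro (h | ⟨k, hk1, hk2, h⟩)
      · rw [h]; exact vertical c hc
      · rw [h]; exact spiral_mem c hc k hk1 hk2
  refine ⟨hmain, fun hcle => ?_⟩
  rw [hmain]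
  have hempty : {l | ∃ k : ℤ, 1 ≤ k ∧ (k : ℝ) < c / (2 * π) ∧
      l = Real.sqrt (4 * π * k * (c - π * k))} = (∅ : Set ℝ) := by
    ext l
    simp only [Set.mem_setOf_eq, Set.mem_empty_iff_false, iff_false]
    rintro ⟨k, hk1, hk2, -⟩
    have hk1' : (1 : ℝ) ≤ (k : ℝ) := by exact_mod_cast hk1
    have : c / (2 * π) ≤ 1 := by
      rw [div_le_one (by positivity)]; linarith
    linarith
  rw [hempty, Set.union_empty]

end Stmt14
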